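/- Let (X, S(t)) be a dynamical system on a Banach space X possessing a compact global attractor 𝒜 (a compact set with S(t)𝒜 = 𝒜 for all t ≥ 0 which attracts every bounded set of X), and assume (X, S(t)) is quasi-stable on 𝒜 at some time t* > 0, with quasi-stability data (Z, K, n_Z, q), where L_K is a Lipschitz constant of K on 𝒜. Then 𝒜 has finite fractal (box-counting) dimension in X, and moreover dim_f^X(𝒜) ≤ [ln(2/(1+q))]^{-1} · ln m_Z(4L_K/(1−q)), where m_Z(R) denotes the maximal number of elements z_i in the ball {z ∈ Z : ‖z‖_Z ≤ R} satisfying n_Z(z_i − z_j) > 1 for i ≠ j. -/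

import Mathlib

open Filter

/-- `coveringNumber A ε` is the minimal number of closed `ε`-balls needed to
cover `A`. -/
noncomputable def coveringNumber {X : Type*} [PseudoMetricSpace X]
    (A : Set X) (ε : ℝ) : ℕ :=
  sInf {n : ℕ | ∃ s : Finset X, s.card = n ∧ A ⊆ ⋃ x ∈ s, Metric.closedBall x ε}

/-- The fractal (box-counting) dimension of a set `A`:
`dim_f A = limsup_{ε → 0⁺} ln N(A,ε) / ln (1/ε)` (as an extended real). -/
noncomputable def fractalDim {X : Type*} [PseudoMetricSpace X] (A : Set X) : EReal :=
  Filter.limsup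
    (fun ε : ℝ => ((Real.log (coveringNumber A ε) / Real.log (1 / ε) : ℝ) : EReal))
    (nhdsWithin 0 (Set.Ioi (0 : ℝ)))

/-- `packingNumber n R` is the maximal number of elements of the closed `R`-ball
of `Z` whose pairwise differences have `n`-seminorm greater than `1`. -/
noncomputable def packingNumber {Z : Type*} [NormedAddCommGroup Z]
    (n : Z → ℝ) (R : ℝ) : ℕ :=
  sSup {k : ℕ | ∃ f : Fin k → Z, (∀ i, ‖f i‖ ≤ R) ∧
    ∀ i j, i ≠ j → 1 < n (f i - f j)}

section AuxLemmas

open Filter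

variable {Z : Type*} [NormedAddCommGroup Z]

/-- If the seminorm `n` is "compact" in the sequential sense, every bounded set
admits a finite `ε`-net with respect to `n`. -/
lemma exists_finite_net_aux (n : Z → ℝ)
    (hncpt : ∀ u : ℕ → Z, Bornology.IsBounded (Set.range u) →
      ∃ φ : ℕ → ℕ, StrictMono φ ∧
        Tendsto (fun p : ℕ × ℕ => n (u (φ p.1) - u (φ p.2))) atTop (nhds 0))
    (B : Set Z) (hB : Bornology.IsBounded B) (ε : ℝ) (hε : 0 < ε) :
    ∃ F : Finset Z, ∀ z ∈ B, ∃ y ∈ F, n (z - y) ≤ ε := by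
  classical
  by_contra hcon
  push_neg at hcon
  have key : ∀ l : List Z, ∃ z, z ∈ B ∧ ∀ y ∈ l, ε < n (z - y) := by
    intro l
    obtain ⟨z, hzB, hz⟩ := hcon l.toFinset
    exact ⟨z, hzB, fun y hy => hz y (List.mem_toFinset.mpr hy)⟩
  choose pick hpickB hpicksep using key
  let v : ℕ → List Z := fun k => Nat.rec [] (fun _ ih => pick ih :: ih) k
  let u : ℕ → Z := fun k => pick (v k)
  have hv : ∀ k, v (k + 1) = u k :: v k := fun _ => rfl
  have hmem : ∀ j k, j < k → u j ∈ v k := by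
    intro j k
    induction k with
    | zero => omega
    | succ k ih =>
      intro h
      rw [hv k]
      rcases Nat.lt_succ_iff_lt_or_eq.mp h with h | h
      · exact List.mem_cons_of_mem _ (ih h)
      · subst h; exact List.mem_cons_self
  have hsep : ∀ j k, j < k → ε < n (u k - u j) :=
    fun j k h => hpicksep (v k) (u j) (hmem j k h)
  have hrange : Bornology.IsBounded (Set.range u) :=
    hB.subset (Set.range_subset_iff.mpr fun k => hpickB (v k))
  obtain ⟨φ, hφ, hten⟩ := hncpt u hrange
  have hev : ∀ᶠ p : ℕ × ℕ in atTop, n (u (φ p.1) - u (φ p.2)) < ε :=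
    hten.eventually_lt_const hε
  rw [eventually_atTop] at hev
  obtain ⟨a, ha⟩ := hev
  set M := max a.1 a.2 with hM
  have h1 : a ≤ (M + 1, M) :=
    ⟨le_trans (le_max_left _ _) (Nat.le_succ _), le_max_right _ _⟩
  have h2 := ha _ h1
  have h3 := hsep (φ M) (φ (M + 1)) (hφ (Nat.lt_succ_self M))
  simp only at h2
  linarith

/-- Existence of a maximal `δ`-separated (in the `n`-pseudometric of the
`K`-images) finite subset of `F`, given a uniform bound on separated sets. -/
lemma exists_maximal_packing_aux {X : Type*} (K : X → Z) (n : Z → ℝ)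
    (hn0 : n 0 = 0) (hnsymm : ∀ z, n (-z) = n z) (δ : ℝ) (hδ : 0 < δ)
    (F : Set X) (m : ℕ)
    (bound : ∀ T : Finset X, ↑T ⊆ F →
      (∀ a ∈ T, ∀ b ∈ T, a ≠ b → δ < n (K a - K b)) → T.card ≤ m) :
    ∃ T : Finset X, ↑T ⊆ F ∧ T.card ≤ m ∧
      ∀ y ∈ F, ∃ t ∈ T, n (K y - K t) ≤ δ := by
  classical
  set 𝒦 : Set ℕ := {k | ∃ T : Finset X, ↑T ⊆ F ∧
    (∀ a ∈ T, ∀ b ∈ T, a ≠ b → δ < n (K a - K b)) ∧ T.card = k} with h𝒦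
  have h0 : 0 ∈ 𝒦 := ⟨∅, by simp⟩
  have hbdd : BddAbove 𝒦 := by
    refine ⟨m, fun k hk => ?_⟩
    obtain ⟨T, h1, h2, h3⟩ := hk
    exact h3 ▸ bound T h1 h2
  obtain ⟨T, hTF, hTsep, hTcard⟩ := Nat.sSup_mem ⟨0, h0⟩ hbdd
  refine ⟨T, hTF, bound T hTF hTsep, ?_⟩
  intro y hy
  by_contra hcon
  push_neg at hcon
  have hyT : y ∉ T := by
    intro hyT
    have h := hcon y hyT
    rw [sub_self, hn0] at h
    exact absurd h (not_lt.mpr hδ.le)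
  have hmem : T.card + 1 ∈ 𝒦 := by
    refine ⟨insert y T, ?_, ?_, by rw [Finset.card_insert_of_notMem hyT]⟩
    · rw [Finset.coe_insert, Set.insert_subset_iff]
      exact ⟨hy, hTF⟩
    · intro a ha b hb hab
      rcases Finset.mem_insert.mp ha with ha' | ha' <;>
        rcases Finset.mem_insert.mp hb with hb' | hb'
      · exact absurd (ha'.trans hb'.symm) hab
      · rw [ha']; exact hcon b hb'
      · rw [hb', show K a - K y = -(K y - K a) by abel, hnsymm]
        exact hcon a ha'
      · exact hTsep a ha' b hb' hab
  have hle : T.card + 1 ≤ sSup 𝒦 := le_csSup hbdd hmem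
  omega

end AuxLemmas


set_option maxHeartbeats 1600000

/-- Theorem 3.4.5 of Chueshov: if a dynamical system has a compact global
attractor `A` and is quasi-stable on `A` (with data `(tStar, Z, K, L, n, q)`),
then `A` has finite fractal dimension in `X`, bounded by
`[ln (2/(1+q))]⁻¹ · ln m_Z(4L/(1−q))`. -/
theorem fractalDim_attractor_le_of_quasiStable {X : Type*}
    [NormedAddCommGroup X] [NormedSpace ℝ X] [CompleteSpace X]
    {Z : Type*} [NormedAddCommGroup Z] [NormedSpace ℝ Z] [CompleteSpace Z]
    (S : ℝ → X → X)
    (hS0 : S 0 = id)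
    (hSadd : ∀ t s : ℝ, 0 ≤ t → 0 ≤ s → S (t + s) = S t ∘ S s)
    (hScont : Continuous fun p : ℝ × X => S p.1 p.2)
    -- `A` is a compact global attractor
    (A : Set X) (hAcpt : IsCompact A)
    (hAinv : ∀ t : ℝ, 0 ≤ t → S t '' A = A)
    (hAattr : ∀ B : Set X, Bornology.IsBounded B →
      ∀ ε : ℝ, 0 < ε → ∃ T : ℝ, ∀ t : ℝ, T ≤ t →
        ∀ x ∈ B, Metric.infDist (S t x) A < ε)
    -- quasi-stability data on `A` at time `tStar`
    (tStar : ℝ) (htStar : 0 < tStar)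
    (K : X → Z) (L : NNReal) (hL : 0 < L) (hK : LipschitzOnWith L K A)
    (n : Z → ℝ)
    (hn0 : ∀ z, 0 ≤ n z)
    (hnadd : ∀ z w, n (z + w) ≤ n z + n w)
    (hnsmul : ∀ (c : ℝ) (z : Z), n (c • z) = |c| * n z)
    (hncpt : ∀ u : ℕ → Z, Bornology.IsBounded (Set.range u) →
      ∃ φ : ℕ → ℕ, StrictMono φ ∧
        Tendsto (fun p : ℕ × ℕ => n (u (φ p.1) - u (φ p.2))) atTop (nhds 0))
    (q : ℝ) (hq0 : 0 ≤ q) (hq1 : q < 1)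
    (hest : ∀ y₁ ∈ A, ∀ y₂ ∈ A,
      ‖S tStar y₁ - S tStar y₂‖ ≤ q * ‖y₁ - y₂‖ + n (K y₁ - K y₂)) :
    fractalDim A < ⊤ ∧
    fractalDim A ≤
      ((Real.log (packingNumber n (4 * (L : ℝ) / (1 - q))) /
        Real.log (2 / (1 + q)) : ℝ) : EReal) := by
  classical
  -- setup
  have hnsymm : ∀ z : Z, n (-z) = n z := by
    intro z
    have h := hnsmul (-1) z
    simpa using h
  have hn0' : n 0 = 0 := by
    have h := hnsmul 0 0
    simpa using h
  have hq1' : (0:ℝ) < 1 - q := by linarith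
  have hLpos : (0:ℝ) < (L : ℝ) := by exact_mod_cast hL
  set R : ℝ := 4 * (L : ℝ) / (1 - q) with hR
  have hRpos : 0 < R := by rw [hR]; positivity
  set PS : Set ℕ := {k : ℕ | ∃ f : Fin k → Z, (∀ i, ‖f i‖ ≤ R) ∧
    ∀ i j, i ≠ j → 1 < n (f i - f j)} with hPS
  set m : ℕ := packingNumber n R with hm
  have hmdef : m = sSup PS := rfl
  -- PS is bounded above
  have hPSbdd : BddAbove PS := by
    obtain ⟨F, hF⟩ := exists_finite_net_aux n hncpt (Metric.closedBall 0 R)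
      Metric.isBounded_closedBall (1/3) (by norm_num)
    refine ⟨F.card, fun k hk => ?_⟩
    obtain ⟨f, hfR, hfsep⟩ := hk
    have hchoice : ∀ i : Fin k, ∃ y ∈ F, n (f i - y) ≤ 1/3 := fun i =>
      hF (f i) (by simpa [Metric.mem_closedBall, dist_zero_right] using hfR i)
    choose g hgF hgn using hchoice
    have hginj : Function.Injective g := by
      intro i j hij
      by_contra hne
      have h1 := hfsep i j hne
      have h2 : n (f i - f j) ≤ n (f i - g i) + n (g i - f j) := by
        have h := hnadd (f i - g i) (g i - f j)
        rwa [sub_add_sub_cancel] at h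
      have h3 : n (g i - f j) = n (f j - g j) := by
        rw [hij, show g j - f j = -(f j - g j) by abel, hnsymm]
      have h4 := hgn i
      have h5 := hgn j
      linarith
    have : Fintype.card (Fin k) ≤ Fintype.card {x // x ∈ F} :=
      Fintype.card_le_of_injective (fun i => (⟨g i, hgF i⟩ : {x // x ∈ F}))
        (fun i j hij => hginj (by simpa using congrArg Subtype.val hij))
    simpa [Fintype.card_coe] using this
  have hmge : ∀ k ∈ PS, k ≤ m := fun k hk => hmdef ▸ le_csSup hPSbdd hk
  have hm1 : 1 ≤ m := by
    refine hmdef ▸ le_csSup hPSbdd ⟨fun _ => (0:Z), fun i => by simp [hRpos.le], ?_⟩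
    intro i j hij
    exact absurd (Subsingleton.elim i j) hij
  -- diameter bound for A
  obtain ⟨C₀, hC₀⟩ := Metric.isBounded_iff.mp hAcpt.isBounded
  set ε₀ : ℝ := max C₀ 1 with hε₀
  have hε₀pos : (0:ℝ) < ε₀ := lt_of_lt_of_le one_pos (le_max_right _ _)
  have hdiam : ∀ x ∈ A, ∀ y ∈ A, dist x y ≤ ε₀ :=
    fun x hx y hy => le_trans (hC₀ hx hy) (le_max_left _ _)
  set θ : ℝ := (1 + q) / 2 with hθ
  have hθpos : 0 < θ := by rw [hθ]; linarith
  have hθ1 : θ < 1 := by rw [hθ]; linarith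
  have hSA : S tStar '' A = A := hAinv tStar htStar.le
  -- iterative covering by small-diameter sets
  have hiter : ∀ k : ℕ, ∃ c : Fin (m ^ k) → Set X,
      (A ⊆ ⋃ i, c i) ∧ ∀ i, c i ⊆ A ∧
        ∀ x ∈ c i, ∀ y ∈ c i, dist x y ≤ θ ^ k * ε₀ := by
    intro k
    induction k with
    | zero =>
      refine ⟨fun _ => A, fun a ha => Set.mem_iUnion.mpr ⟨⟨0, by simp⟩, ha⟩,
        fun i => ⟨subset_rfl, by simpa using hdiam⟩⟩
    | succ k ih =>
      obtain ⟨c, hcov, hc⟩ := ih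
      set ε : ℝ := θ ^ k * ε₀ with hεdef
      have hεpos : 0 < ε := by rw [hεdef]; positivity
      set δ : ℝ := (1 - q) * ε / 4 with hδdef
      have hδpos : 0 < δ := by rw [hδdef]; positivity
      -- cardinality bound for δ-separated sets inside a piece
      have hbound : ∀ i : Fin (m ^ k), ∀ T : Finset X, ↑T ⊆ c i →
          (∀ a ∈ T, ∀ b ∈ T, a ≠ b → δ < n (K a - K b)) → T.card ≤ m := by
        intro i T hTsub hTsep
        rcases Nat.eq_zero_or_pos T.card with h0 | hpos
        · omega
        · obtain ⟨a₀, ha₀⟩ := Finset.card_pos.mp hpos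
          have ha₀A : a₀ ∈ A := (hc i).1 (hTsub ha₀)
          apply hmge
          rw [hPS]
          refine ⟨fun j => δ⁻¹ • (K ((T.equivFin.symm j : {x // x ∈ T}) : X) - K a₀),
            ?_, ?_⟩
          · intro j
            set a : X := ((T.equivFin.symm j : {x // x ∈ T}) : X) with hadef
            have haT : a ∈ T := (T.equivFin.symm j).2
            have haA : a ∈ A := (hc i).1 (hTsub haT)
            have hd : dist a a₀ ≤ ε := (hc i).2 a (hTsub haT) a₀ (hTsub ha₀)
            have hKd : dist (K a) (K a₀) ≤ (L : ℝ) * dist a a₀ :=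
              hK.dist_le_mul a haA a₀ ha₀A
            have hKd' : ‖K a - K a₀‖ ≤ (L : ℝ) * ε := by
              rw [← dist_eq_norm]
              exact le_trans hKd (by nlinarith)
            calc ‖δ⁻¹ • (K a - K a₀)‖ = |δ⁻¹| * ‖K a - K a₀‖ := by
                  rw [norm_smul, Real.norm_eq_abs]
              _ = δ⁻¹ * ‖K a - K a₀‖ := by rw [abs_of_pos (inv_pos.mpr hδpos)]
              _ ≤ δ⁻¹ * ((L : ℝ) * ε) := by
                  exact mul_le_mul_of_nonneg_left hKd' (inv_pos.mpr hδpos).le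
              _ = R := by
                  rw [hδdef, hR]
                  field_simp
          · intro j j' hjj'
            set a : X := ((T.equivFin.symm j : {x // x ∈ T}) : X) with hadef
            set b : X := ((T.equivFin.symm j' : {x // x ∈ T}) : X) with hbdef
            have haT : a ∈ T := (T.equivFin.symm j).2
            have hbT : b ∈ T := (T.equivFin.symm j').2
            have hne : a ≠ b := by
              intro h
              exact hjj' (T.equivFin.symm.injective (Subtype.ext h))
            have hsep := hTsep a haT b hbT hne
            have heq : δ⁻¹ • (K a - K a₀) - δ⁻¹ • (K b - K a₀)
                = δ⁻¹ • (K a - K b) := by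
              rw [← smul_sub]
              congr 1
              abel
            rw [heq, hnsmul, abs_of_pos (inv_pos.mpr hδpos)]
            calc (1:ℝ) = δ⁻¹ * δ := (inv_mul_cancel₀ hδpos.ne').symm
              _ < δ⁻¹ * n (K a - K b) :=
                  mul_lt_mul_of_pos_left hsep (inv_pos.mpr hδpos)
      have hpack : ∀ i : Fin (m ^ k), ∃ T : Finset X, ↑T ⊆ c i ∧ T.card ≤ m ∧
          ∀ y ∈ c i, ∃ t ∈ T, n (K y - K t) ≤ δ :=
        fun i => exists_maximal_packing_aux K n hn0' hnsymm δ hδpos (c i) m (hbound i)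
      choose T hTsub hTcard hTnet using hpack
      -- the refined pieces
      set G : Fin (m ^ k) → Fin m → Set X := fun i j =>
        if h : (j : ℕ) < (T i).toList.length then
          S tStar '' {y ∈ c i | n (K y - K ((T i).toList.get ⟨j, h⟩)) ≤ δ}
        else ∅ with hG
      set e : Fin (m ^ k) × Fin m ≃ Fin (m ^ (k + 1)) :=
        finProdFinEquiv.trans (finCongr (pow_succ m k).symm) with he
      refine ⟨fun r => G (e.symm r).1 (e.symm r).2, ?_, ?_⟩
      · -- covering
        intro a ha
        rw [← hSA] at ha
        obtain ⟨y, hyA, rfl⟩ := ha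
        obtain ⟨i, hyi⟩ := Set.mem_iUnion.mp (hcov hyA)
        obtain ⟨t, htT, htn⟩ := hTnet i y hyi
        obtain ⟨⟨j, hj⟩, hget⟩ := List.mem_iff_get.mp (Finset.mem_toList.mpr htT)
        have hjm : j < m := lt_of_lt_of_le (by
          rwa [Finset.length_toList] at hj) (hTcard i)
        refine Set.mem_iUnion.mpr ⟨e (i, ⟨j, hjm⟩), ?_⟩
        rw [Equiv.symm_apply_apply]
        show S tStar y ∈ G i ⟨j, hjm⟩
        rw [hG]
        simp only
        rw [dif_pos (show ((⟨j, hjm⟩ : Fin m) : ℕ) < (T i).toList.length from hj)]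
        exact ⟨y, ⟨hyi, by rw [show (T i).toList.get ⟨j, hj⟩ = t from hget]; exact htn⟩, rfl⟩
      · -- pieces are small and inside A
        intro r
        set i := (e.symm r).1
        set j := (e.symm r).2
        rw [hG]
        simp only
        by_cases hjl : (j : ℕ) < (T i).toList.length
        · rw [dif_pos hjl]
          set t : X := (T i).toList.get ⟨j, hjl⟩ with ht
          have htT : t ∈ T i := by
            rw [ht]
            exact Finset.mem_toList.mp (List.get_mem _ _)
          constructor
          · rintro x ⟨y, ⟨hy1, _⟩, rfl⟩
            rw [← hSA]
            exact ⟨y, (hc i).1 hy1, rfl⟩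
          · rintro x ⟨y, ⟨hy1, hy2⟩, rfl⟩ x' ⟨y', ⟨hy1', hy2'⟩, rfl⟩
            have hyA : y ∈ A := (hc i).1 hy1
            have hy'A : y' ∈ A := (hc i).1 hy1'
            have hyy' : ‖y - y'‖ ≤ ε := by
              rw [← dist_eq_norm]
              exact (hc i).2 y hy1 y' hy1'
            have hn1 : n (K y - K y') ≤ δ + δ := by
              have h := hnadd (K y - K t) (K t - K y')
              rw [sub_add_sub_cancel] at h
              have h2 : n (K t - K y') ≤ δ := by
                rw [show K t - K y' = -(K y' - K t) by abel, hnsymm]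
                exact hy2'
              linarith
            calc dist (S tStar y) (S tStar y') = ‖S tStar y - S tStar y'‖ :=
                  dist_eq_norm _ _
              _ ≤ q * ‖y - y'‖ + n (K y - K y') := hest y hyA y' hy'A
              _ ≤ q * ε + (δ + δ) := by
                  have := mul_le_mul_of_nonneg_left hyy' hq0
                  linarith
              _ ≤ θ ^ (k + 1) * ε₀ := by
                  have heq : θ ^ (k + 1) * ε₀ = θ * ε := by
                    rw [hεdef, pow_succ]; ring
                  rw [heq, hθ, hδdef]
                  linarith
        · rw [dif_neg hjl]
          exact ⟨by simp, by simp⟩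
  -- from diameter covers to covering numbers
  have hcovN : ∀ k : ℕ, ∀ ε' : ℝ, θ ^ k * ε₀ ≤ ε' → coveringNumber A ε' ≤ m ^ k := by
    intro k ε' hε'
    obtain ⟨c, hcov, hc⟩ := hiter k
    set f : Fin (m ^ k) → X := fun i =>
      if h : (c i).Nonempty then h.some else 0 with hf
    set s : Finset X := Finset.image f Finset.univ with hs
    have hsub : A ⊆ ⋃ x ∈ s, Metric.closedBall x ε' := by
      intro a ha
      obtain ⟨i, hai⟩ := Set.mem_iUnion.mp (hcov ha)
      have hne : (c i).Nonempty := ⟨a, hai⟩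
      refine Set.mem_iUnion₂.mpr ⟨f i, Finset.mem_image_of_mem f (Finset.mem_univ i), ?_⟩
      have hfi : f i = hne.some := dif_pos hne
      rw [Metric.mem_closedBall, hfi]
      exact le_trans ((hc i).2 a hai hne.some hne.some_mem) hε'
    have h1 : coveringNumber A ε' ≤ s.card := Nat.sInf_le ⟨s, rfl, hsub⟩
    exact le_trans h1 (le_trans Finset.card_image_le (by simp))
  -- analysis: bound the limsup
  set θ' : ℝ := Real.log (2 / (1 + q)) with hθ'def
  have h2θ : (1:ℝ) / θ = 2 / (1 + q) := by rw [hθ]; exact one_div_div _ _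
  have hθ'pos : 0 < θ' := by
    rw [hθ'def]
    exact Real.log_pos ((one_lt_div (show (0:ℝ) < 1 + q by linarith)).mpr (by linarith))
  have hlogθ : Real.log θ = -θ' := by
    have h : θ' = -Real.log θ := by rw [hθ'def, ← h2θ, one_div, Real.log_inv]
    linarith
  have hlogm : 0 ≤ Real.log m := Real.log_nonneg (by exact_mod_cast hm1)
  set Creal : ℝ := Real.log m / θ' with hCreal
  set D : ℝ := (Real.log ε₀ / θ' + 1) * Real.log m with hD
  -- eventual bound
  have hev : ∀ᶠ ε in nhdsWithin (0:ℝ) (Set.Ioi 0),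
      ((Real.log (coveringNumber A ε) / Real.log (1 / ε) : ℝ) : EReal) ≤
        ((Creal + D / Real.log (1 / ε) : ℝ) : EReal) := by
    have hmem : Set.Ioo (0:ℝ) (min ε₀ 1) ∈ nhdsWithin (0:ℝ) (Set.Ioi 0) :=
      Ioo_mem_nhdsGT_of_mem ⟨le_refl _, lt_min hε₀pos one_pos⟩
    filter_upwards [hmem] with ε hε
    obtain ⟨hε0, hεlt⟩ := hε
    have hεε₀ : ε ≤ ε₀ := le_of_lt (lt_of_lt_of_le hεlt (min_le_left _ _))
    have hε1 : ε < 1 := lt_of_lt_of_le hεlt (min_le_right _ _)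
    have hLg : 0 < Real.log (1 / ε) := by
      apply Real.log_pos
      rw [one_div]
      exact (one_lt_inv_iff₀).mpr ⟨hε0, hε1⟩
    have hLgε : Real.log (1 / ε) = -Real.log ε := by
      rw [one_div, Real.log_inv]
    have hex : ∃ k : ℕ, θ ^ k * ε₀ ≤ ε := by
      obtain ⟨k, hk⟩ := exists_pow_lt_of_lt_one (div_pos hε0 hε₀pos) hθ1
      exact ⟨k, le_of_lt ((lt_div_iff₀ hε₀pos).mp hk)⟩
    obtain ⟨k, hkspec, hkmin⟩ : ∃ k : ℕ, (θ ^ k * ε₀ ≤ ε) ∧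
        ∀ j < k, ¬ (θ ^ j * ε₀ ≤ ε) :=
      ⟨Nat.find hex, Nat.find_spec hex, fun j hj => Nat.find_min hex hj⟩
    have hkle := hcovN k ε hkspec
    have hlogN : Real.log (coveringNumber A ε) ≤ (k : ℝ) * Real.log m := by
      rcases Nat.eq_zero_or_pos (coveringNumber A ε) with h | h
      · rw [h]
        simp only [Nat.cast_zero, Real.log_zero]
        positivity
      · calc Real.log (coveringNumber A ε) ≤ Real.log ((m : ℝ) ^ k) := by
              apply Real.log_le_log (by exact_mod_cast h)
              exact_mod_cast hkle
          _ = (k : ℝ) * Real.log m := by rw [Real.log_pow]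
    have hkbound : ((k : ℝ) - 1) * θ' ≤ Real.log ε₀ + Real.log (1 / ε) := by
      have hRHS : 0 ≤ Real.log ε₀ + Real.log (1 / ε) := by
        have h1 : Real.log ε ≤ Real.log ε₀ := Real.log_le_log hε0 hεε₀
        rw [hLgε]; linarith
      rcases Nat.eq_zero_or_pos k with h0 | hpos
      · rw [h0]; simp only [Nat.cast_zero]; nlinarith [hθ'pos.le, hRHS]
      · have hmin : ¬ (θ ^ (k - 1) * ε₀ ≤ ε) := hkmin (k - 1) (by omega)
        push_neg at hmin
        have hlog : Real.log ε < Real.log (θ ^ (k - 1) * ε₀) :=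
          Real.log_lt_log hε0 hmin
        rw [Real.log_mul (pow_ne_zero _ hθpos.ne') hε₀pos.ne',
          Real.log_pow, hlogθ] at hlog
        have hcast : ((k - 1 : ℕ) : ℝ) = (k : ℝ) - 1 := by
          have : 1 ≤ k := hpos
          push_cast [this]
          ring
        rw [hcast] at hlog
        rw [hLgε]
        nlinarith
    -- combine
    rw [EReal.coe_le_coe_iff]
    set Lg : ℝ := Real.log (1 / ε)
    have hk2 : (k : ℝ) ≤ (Real.log ε₀ + Lg) / θ' + 1 := by
      have h := (le_div_iff₀ hθ'pos).mpr hkbound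
      linarith
    have hchain : Real.log (coveringNumber A ε) ≤
        ((Real.log ε₀ + Lg) / θ' + 1) * Real.log m :=
      le_trans hlogN (mul_le_mul_of_nonneg_right hk2 hlogm)
    have stepA : Real.log (coveringNumber A ε) / Lg ≤
        (((Real.log ε₀ + Lg) / θ' + 1) * Real.log m) / Lg :=
      div_le_div_of_nonneg_right hchain hLg.le
    have step3 : (((Real.log ε₀ + Lg) / θ' + 1) * Real.log m) / Lg = Creal + D / Lg := by
      rw [hCreal, hD]
      field_simp
      ring
    linarith [stepA, step3]
  -- the limit of the majorant
  have hinv : Tendsto (fun ε : ℝ => 1 / ε) (nhdsWithin (0:ℝ) (Set.Ioi 0)) atTop := by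
    simpa [one_div] using (tendsto_inv_nhdsGT_zero : Tendsto (fun x : ℝ => x⁻¹)
      (nhdsWithin 0 (Set.Ioi 0)) atTop)
  have hlog1 : Tendsto (fun ε : ℝ => Real.log (1 / ε))
      (nhdsWithin (0:ℝ) (Set.Ioi 0)) atTop := Real.tendsto_log_atTop.comp hinv
  have hDten : Tendsto (fun ε : ℝ => D / Real.log (1 / ε))
      (nhdsWithin (0:ℝ) (Set.Ioi 0)) (nhds 0) := Tendsto.div_atTop tendsto_const_nhds hlog1
  have hgR : Tendsto (fun ε : ℝ => Creal + D / Real.log (1 / ε))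
      (nhdsWithin (0:ℝ) (Set.Ioi 0)) (nhds Creal) := by
    simpa using hDten.const_add Creal
  have hgE : Tendsto (fun ε : ℝ => ((Creal + D / Real.log (1 / ε) : ℝ) : EReal))
      (nhdsWithin (0:ℝ) (Set.Ioi 0)) (nhds ((Creal : ℝ) : EReal)) :=
    EReal.tendsto_coe.mpr hgR
  have hlim : fractalDim A ≤ ((Creal : ℝ) : EReal) := by
    have h1 := limsup_le_limsup hev
    rw [fractalDim]
    exact le_trans h1 (le_of_eq hgE.limsup_eq)
  exact ⟨lt_of_le_of_lt hlim (EReal.coe_lt_top _), hlim⟩
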